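/- Let (F(n))_{n∈ℕ^d} be a filtration indexed by ℕ^d (componentwise order) on a probability space, and let (M(n))_{n∈ℕ^d} be a real-valued F-martingale such that for some constant c < ∞, for every n ∈ ℕ^d and every standard basis vector e_l (l = 1,…,d), E[|M(n + e_l) − M(n)| | F(n)] ≤ c a.s. Let (ρ(t))_{t≥0} be a family of ℕ^d-valued F-stopping times that is pointwise nondecreasing in t (ρ(s)(ω) ≤ ρ(t)(ω) componentwise for s ≤ t) and satisfies E[∑_{l=1}^d ρ_l(t)] < ∞ for every t ≥ 0. Then the process N(t) := M(ρ(t)) is a martingale with respect to the filtration G(t) := F(ρ(t)): each N(t) is integrable, G(t)-measurable, and E[N(t) | G(s)] = N(s) a.s. for all 0 ≤ s ≤ t. -/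

import Mathlib

open MeasureTheory ProbabilityTheory Set
open scoped NNReal

noncomputable section

namespace Stmt6

variable {Ω : Type*} {d : ℕ}

/-- The stopped σ-algebra `F(γ) = {A : A ∩ {γ ≤ n} ∈ F(n) for all n ∈ ℕ^d}` of an
`ℕ^d`-valued stopping time `γ` for a multiparameter filtration `F`. -/
def stoppedSigma (F : (Fin d → ℕ) → MeasurableSpace Ω) (γ : Ω → Fin d → ℕ)
    (hγ : ∀ n, MeasurableSet[F n] {ω | γ ω ≤ n}) : MeasurableSpace Ω where
  MeasurableSet' A := ∀ n, MeasurableSet[F n] (A ∩ {ω | γ ω ≤ n})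
  measurableSet_empty := fun n => by
    simp
  measurableSet_compl := fun A hA n => by
    have h : Aᶜ ∩ {ω | γ ω ≤ n} = {ω | γ ω ≤ n} \ (A ∩ {ω | γ ω ≤ n}) := by
      ext ω; by_cases h : γ ω ≤ n <;> simp [h]
    rw [h]
    exact (hγ n).diff (hA n)
  measurableSet_iUnion := fun A hA n => by
    rw [Set.iUnion_inter]
    exact MeasurableSet.iUnion fun i => hA i n

set_option linter.unusedSectionVars false

section Aux

variable [inst : MeasurableSpace Ω] {P : Measure Ω} [IsProbabilityMeasure P]
  {F : (Fin d → ℕ) → MeasurableSpace Ω} {M : (Fin d → ℕ) → Ω → ℝ}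
  {γ σ τ : Ω → Fin d → ℕ} {N : Fin d → ℕ}

lemma mem_stoppedSigma_iff {hγ : ∀ n, MeasurableSet[F n] {ω | γ ω ≤ n}} {A : Set Ω} :
    MeasurableSet[stoppedSigma F γ hγ] A ↔ ∀ n, MeasurableSet[F n] (A ∩ {ω | γ ω ≤ n}) :=
  Iff.rfl

lemma stoppedSigma_le (hF_le : ∀ n, F n ≤ inst)
    (hγ : ∀ n, MeasurableSet[F n] {ω | γ ω ≤ n}) :
    stoppedSigma F γ hγ ≤ inst := by
  intro A hA
  have h : A = ⋃ n : Fin d → ℕ, A ∩ {ω | γ ω ≤ n} := by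
    ext ω
    simp only [Set.mem_iUnion, Set.mem_inter_iff, Set.mem_setOf_eq]
    exact ⟨fun h => ⟨γ ω, h, le_refl _⟩, fun ⟨n, h, _⟩ => h⟩
  rw [h]
  exact MeasurableSet.iUnion fun n => hF_le n _ (hA n)

lemma measurableSet_eqSet (hF_mono : ∀ ⦃m n : Fin d → ℕ⦄, m ≤ n → F m ≤ F n)
    (hγ : ∀ n, MeasurableSet[F n] {ω | γ ω ≤ n}) (m : Fin d → ℕ) :
    MeasurableSet[F m] {ω | γ ω = m} := by
  have h : {ω | γ ω = m} =
      {ω | γ ω ≤ m} \ ⋃ (l : Fin d) (_ : 0 < m l),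
        {ω | γ ω ≤ Function.update m l (m l - 1)} := by
    ext ω
    simp only [Set.mem_diff, Set.mem_iUnion, Set.mem_setOf_eq, not_exists]
    constructor
    · rintro rfl
      refine ⟨le_refl _, fun l h0 hmem => ?_⟩
      have h2 : γ ω l ≤ γ ω l - 1 := by simpa using Pi.le_def.mp hmem l
      omega
    · rintro ⟨hle, hnot⟩
      funext l
      by_contra hne
      have hlel : γ ω l ≤ m l := Pi.le_def.mp hle l
      have hlt : γ ω l < m l := lt_of_le_of_ne hlel hne
      have h0 : 0 < m l := by omega
      apply hnot l h0
      refine Pi.le_def.mpr fun j => ?_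
      rcases eq_or_ne j l with rfl | hj
      · rw [Function.update_self]
        omega
      · rw [Function.update_of_ne hj]
        exact Pi.le_def.mp hle j
  rw [h]
  refine (hγ m).diff (MeasurableSet.iUnion fun l => MeasurableSet.iUnion fun h0 => ?_)
  refine hF_mono (Pi.le_def.mpr fun j => ?_) _ (hγ _)
  rcases eq_or_ne j l with rfl | hj
  · rw [Function.update_self]
    omega
  · rw [Function.update_of_ne hj]

lemma stoppedSigma_mono (hle : ∀ ω, τ ω ≤ σ ω)
    (hτ : ∀ n, MeasurableSet[F n] {ω | τ ω ≤ n})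
    (hσ : ∀ n, MeasurableSet[F n] {ω | σ ω ≤ n}) :
    stoppedSigma F τ hτ ≤ stoppedSigma F σ hσ := by
  intro A hA n
  have h : A ∩ {ω | σ ω ≤ n} = (A ∩ {ω | τ ω ≤ n}) ∩ {ω | σ ω ≤ n} := by
    ext ω
    simp only [Set.mem_inter_iff, Set.mem_setOf_eq]
    exact ⟨fun ⟨h1, h2⟩ => ⟨⟨h1, le_trans (hle ω) h2⟩, h2⟩, fun ⟨⟨h1, _⟩, h2⟩ => ⟨h1, h2⟩⟩
  rw [h]
  exact (hA n).inter (hσ n)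

lemma measurable_stopped (hF_mono : ∀ ⦃m n : Fin d → ℕ⦄, m ≤ n → F m ≤ F n)
    (hM_meas : ∀ n, Measurable[F n] (M n))
    (hγ : ∀ n, MeasurableSet[F n] {ω | γ ω ≤ n}) :
    Measurable[stoppedSigma F γ hγ] (fun ω => M (γ ω) ω) := by
  intro t ht n
  have h : (fun ω => M (γ ω) ω) ⁻¹' t ∩ {ω | γ ω ≤ n} =
      ⋃ (m : Fin d → ℕ) (_ : m ≤ n), ({ω | γ ω = m} ∩ M m ⁻¹' t) := by
    ext ω
    simp only [Set.mem_inter_iff, Set.mem_preimage, Set.mem_setOf_eq, Set.mem_iUnion]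
    constructor
    · rintro ⟨hmem, hle⟩
      exact ⟨γ ω, hle, rfl, hmem⟩
    · rintro ⟨m, hmn, h1, h2⟩
      rw [h1]
      exact ⟨h2, hmn⟩
  rw [h]
  exact MeasurableSet.iUnion fun m => MeasurableSet.iUnion fun hmn =>
    (hF_mono hmn _ (measurableSet_eqSet hF_mono hγ m)).inter (hF_mono hmn _ (hM_meas m ht))

def box (N : Fin d → ℕ) : Finset (Fin d → ℕ) :=
  Fintype.piFinset fun l => Finset.range (N l + 1)

lemma mem_box {m : Fin d → ℕ} : m ∈ box N ↔ m ≤ N := by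
  simp only [box, Fintype.mem_piFinset, Finset.mem_range, Nat.lt_succ_iff]
  exact ⟨fun h => Pi.le_def.mpr h, fun h => Pi.le_def.mp h⟩

lemma stopped_eq_sum (hγb : ∀ ω, γ ω ≤ N) (g : (Fin d → ℕ) → Ω → ℝ) (ω : Ω) :
    g (γ ω) ω = ∑ m ∈ box N, Set.indicator {ω' | γ ω' = m} (g m) ω := by
  rw [Finset.sum_eq_single (γ ω)]
  · exact (Set.indicator_of_mem (show ω ∈ {ω' | γ ω' = γ ω} from rfl) (g (γ ω))).symm
  · intro b _ hb
    exact Set.indicator_of_notMem (show ω ∉ {ω' | γ ω' = b} from fun h => hb (Set.mem_setOf_eq ▸ h).symm) (g b)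
  · intro h
    exact absurd (mem_box.2 (hγb ω)) h

lemma integrable_stopped_bdd (hF_le : ∀ n, F n ≤ inst)
    (hF_mono : ∀ ⦃m n : Fin d → ℕ⦄, m ≤ n → F m ≤ F n)
    (hM_int : ∀ n, Integrable (M n) P)
    (hγ : ∀ n, MeasurableSet[F n] {ω | γ ω ≤ n}) (hγb : ∀ ω, γ ω ≤ N) :
    Integrable (fun ω => M (γ ω) ω) P := by
  have h : (fun ω => M (γ ω) ω)
      = fun ω => ∑ m ∈ box N, Set.indicator {ω' | γ ω' = m} (M m) ω :=
    funext fun ω => stopped_eq_sum hγb M ω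
  rw [h]
  exact integrable_finset_sum _ fun m _ =>
    (hM_int m).indicator (hF_le m _ (measurableSet_eqSet hF_mono hγ m))

lemma setIntegral_mart (hF_le : ∀ n, F n ≤ inst)
    (hM_int : ∀ n, Integrable (M n) P)
    (hM_mart : ∀ m n : Fin d → ℕ, m ≤ n → P[M n | F m] =ᵐ[P] M m)
    {m n : Fin d → ℕ} (hmn : m ≤ n) {A : Set Ω} (hA : MeasurableSet[F m] A) :
    ∫ ω in A, M n ω ∂P = ∫ ω in A, M m ω ∂P := by
  haveI : SigmaFinite (P.trim (hF_le m)) := inferInstance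
  rw [← setIntegral_condExp (hF_le m) (hM_int n) hA]
  exact setIntegral_congr_ae (hF_le m _ hA) ((hM_mart m n hmn).mono fun ω h _ => h)

lemma setIntegral_stopped_decomp (hF_le : ∀ n, F n ≤ inst)
    (hF_mono : ∀ ⦃m n : Fin d → ℕ⦄, m ≤ n → F m ≤ F n)
    (hγ : ∀ n, MeasurableSet[F n] {ω | γ ω ≤ n}) (hγb : ∀ ω, γ ω ≤ N)
    (g : (Fin d → ℕ) → Ω → ℝ) (hg : ∀ m, Integrable (g m) P)
    {A : Set Ω} (hA : MeasurableSet A) :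
    ∫ ω in A, g (γ ω) ω ∂P = ∑ m ∈ box N, ∫ ω in A ∩ {ω' | γ ω' = m}, g m ω ∂P := by
  have h1 : ∫ ω in A, g (γ ω) ω ∂P
      = ∫ ω in A, (∑ m ∈ box N, Set.indicator {ω' | γ ω' = m} (g m) ω) ∂P :=
    integral_congr_ae (Filter.Eventually.of_forall fun ω => stopped_eq_sum hγb g ω)
  rw [h1, integral_finset_sum]
  · exact Finset.sum_congr rfl fun m _ =>
      setIntegral_indicator (hF_le m _ (measurableSet_eqSet hF_mono hγ m))
  · intro m _
    exact ((hg m).indicator (hF_le m _ (measurableSet_eqSet hF_mono hγ m))).integrableOn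

lemma setIntegral_stopped_eq (hF_le : ∀ n, F n ≤ inst)
    (hF_mono : ∀ ⦃m n : Fin d → ℕ⦄, m ≤ n → F m ≤ F n)
    (hM_int : ∀ n, Integrable (M n) P)
    (hM_mart : ∀ m n : Fin d → ℕ, m ≤ n → P[M n | F m] =ᵐ[P] M m)
    (hγ : ∀ n, MeasurableSet[F n] {ω | γ ω ≤ n}) (hγb : ∀ ω, γ ω ≤ N)
    {A : Set Ω} (hA : MeasurableSet[stoppedSigma F γ hγ] A) :
    ∫ ω in A, M (γ ω) ω ∂P = ∫ ω in A, M N ω ∂P := by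
  have hA' : MeasurableSet A := stoppedSigma_le hF_le hγ _ hA
  rw [setIntegral_stopped_decomp hF_le hF_mono hγ hγb M hM_int hA',
      setIntegral_stopped_decomp hF_le hF_mono hγ hγb (fun _ => M N) (fun _ => hM_int N) hA']
  refine Finset.sum_congr rfl fun m hm => ?_
  have hmem : MeasurableSet[F m] (A ∩ {ω' | γ ω' = m}) := by
    have h : A ∩ {ω' | γ ω' = m} = (A ∩ {ω' | γ ω' ≤ m}) ∩ {ω' | γ ω' = m} := by
      ext ω
      simp only [Set.mem_inter_iff, Set.mem_setOf_eq]
      exact ⟨fun ⟨h1, h2⟩ => ⟨⟨h1, le_of_eq h2⟩, h2⟩, fun ⟨⟨h1, _⟩, h2⟩ => ⟨h1, h2⟩⟩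
    rw [h]
    exact (hA m).inter (measurableSet_eqSet hF_mono hγ m)
  exact (setIntegral_mart hF_le hM_int hM_mart (mem_box.1 hm) hmem).symm

open scoped Classical in
/-- Truncation of a stopping time at the constant time `(k,…,k)`. -/
def trunc (γ : Ω → Fin d → ℕ) (k : ℕ) (ω : Ω) : Fin d → ℕ :=
  if γ ω ≤ (fun _ => k) then γ ω else (fun _ => k)

lemma trunc_le_const (k : ℕ) (ω : Ω) : trunc γ k ω ≤ fun _ => k := by
  unfold trunc
  split_ifs with h
  · exact h
  · exact le_refl _

lemma trunc_of_le {k : ℕ} {ω : Ω} (h : γ ω ≤ fun _ => k) : trunc γ k ω = γ ω :=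
  if_pos h

lemma trunc_of_not_le {k : ℕ} {ω : Ω} (h : ¬ γ ω ≤ fun _ => k) :
    trunc γ k ω = fun _ => k := if_neg h

lemma trunc_stop (hF_mono : ∀ ⦃m n : Fin d → ℕ⦄, m ≤ n → F m ≤ F n)
    (hγ : ∀ n, MeasurableSet[F n] {ω | γ ω ≤ n}) (k : ℕ) :
    ∀ n, MeasurableSet[F n] {ω | trunc γ k ω ≤ n} := by
  intro n
  by_cases hkn : (fun _ => k : Fin d → ℕ) ≤ n
  · have h : {ω | trunc γ k ω ≤ n} = Set.univ :=
      Set.eq_univ_of_forall fun ω => le_trans (trunc_le_const k ω) hkn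
    rw [h]
    exact @MeasurableSet.univ _ (F n)
  · have h : {ω | trunc γ k ω ≤ n} = {ω | γ ω ≤ fun l => min (n l) k} := by
      ext ω
      simp only [Set.mem_setOf_eq]
      unfold trunc
      split_ifs with hle
      · constructor
        · intro h2
          exact Pi.le_def.mpr fun l => le_min (Pi.le_def.mp h2 l) (Pi.le_def.mp hle l)
        · intro h2
          exact Pi.le_def.mpr fun l => le_trans (Pi.le_def.mp h2 l) (min_le_left _ _)
      · constructor
        · intro h2
          exact absurd (Pi.le_def.mpr fun l => Pi.le_def.mp h2 l) hkn
        · intro h2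
          exact absurd (Pi.le_def.mpr fun l => le_trans (Pi.le_def.mp h2 l) (min_le_right _ _)) hle
    rw [h]
    exact hF_mono (Pi.le_def.mpr fun l => min_le_left _ _) _ (hγ _)

lemma trunc_le_trunc {k : ℕ} {ω : Ω} (h : τ ω ≤ σ ω) : trunc τ k ω ≤ trunc σ k ω := by
  unfold trunc
  split_ifs with h1 h2 h2
  · exact h
  · exact h1
  · exact absurd (le_trans h h2) h1
  · exact le_refl _

/-- The maximal coordinate of a stopping time. -/
def mx (γ : Ω → Fin d → ℕ) (ω : Ω) : ℕ := Finset.univ.sup (γ ω)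

lemma mx_le_iff {ω : Ω} {j : ℕ} : mx γ ω ≤ j ↔ γ ω ≤ fun _ => j := by
  rw [mx, Finset.sup_le_iff]
  exact ⟨fun h => Pi.le_def.mpr fun l => h l (Finset.mem_univ l),
    fun h l _ => Pi.le_def.mp h l⟩

/-- The "diagonal" upper truncation of a stopping time. -/
def zeta (γ : Ω → Fin d → ℕ) (k : ℕ) (ω : Ω) : Fin d → ℕ :=
  fun _ => min (mx γ ω) k

lemma zeta_le_const (k : ℕ) (ω : Ω) : zeta γ k ω ≤ fun _ => k :=
  Pi.le_def.mpr fun _ => min_le_right _ _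

lemma trunc_le_zeta (k : ℕ) (ω : Ω) : trunc γ k ω ≤ zeta γ k ω := by
  unfold trunc
  split_ifs with h
  · exact Pi.le_def.mpr fun l => le_min (Finset.le_sup (Finset.mem_univ l)) (Pi.le_def.mp h l)
  · refine Pi.le_def.mpr fun l => le_min ?_ (le_refl _)
    by_contra hk
    exact h (mx_le_iff.mp (by omega))

lemma zeta_stop (hF_mono : ∀ ⦃m n : Fin d → ℕ⦄, m ≤ n → F m ≤ F n)
    (hγ : ∀ n, MeasurableSet[F n] {ω | γ ω ≤ n}) (k : ℕ) :
    ∀ n, MeasurableSet[F n] {ω | zeta γ k ω ≤ n} := by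
  intro n
  by_cases hkn : (fun _ => k : Fin d → ℕ) ≤ n
  · have h : {ω | zeta γ k ω ≤ n} = Set.univ :=
      Set.eq_univ_of_forall fun ω => le_trans (zeta_le_const k ω) hkn
    rw [h]
    exact @MeasurableSet.univ _ (F n)
  · obtain ⟨l0, hl0⟩ : ∃ l0, ¬ k ≤ n l0 := by
      by_contra hcon
      push_neg at hcon
      exact hkn (Pi.le_def.mpr fun l => hcon l)
    have hne : (Finset.univ : Finset (Fin d)).Nonempty := ⟨l0, Finset.mem_univ l0⟩
    set b := Finset.univ.inf' hne n with hb
    have h : {ω | zeta γ k ω ≤ n} = {ω | γ ω ≤ fun _ => b} := by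
      ext ω
      simp only [Set.mem_setOf_eq]
      constructor
      · intro h2
        have hmx : mx γ ω ≤ b := by
          have h3 : min (mx γ ω) k ≤ n l0 := Pi.le_def.mp h2 l0
          have h4 : mx γ ω ≤ n l0 := by omega
          refine Finset.le_inf' hne _ fun l _ => ?_
          have h5 : min (mx γ ω) k ≤ n l := Pi.le_def.mp h2 l
          omega
        exact mx_le_iff.mp hmx
      · intro h2
        have hmx : mx γ ω ≤ b := mx_le_iff.mpr h2
        refine Pi.le_def.mpr fun l => ?_
        have h5 : b ≤ n l := Finset.inf'_le _ (Finset.mem_univ l)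
        simp only [zeta]
        omega
    rw [h]
    have hbn : (fun _ => b : Fin d → ℕ) ≤ n :=
      Pi.le_def.mpr fun l => Finset.inf'_le _ (Finset.mem_univ l)
    exact hF_mono hbn _ (hγ _)

lemma edge_bound (hF_le : ∀ n, F n ≤ inst)
    (hM_int : ∀ n, Integrable (M n) P) {c' : ℝ}
    (hc' : ∀ (n : Fin d → ℕ) (l : Fin d), ∀ᵐ ω ∂P,
      (P[fun ω' => |M (Function.update n l (n l + 1)) ω' - M n ω'| | F n]) ω ≤ c')
    (n : Fin d → ℕ) (l : Fin d) {B : Set Ω} (hB : MeasurableSet[F n] B) :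
    ∫ ω in B, ‖M (Function.update n l (n l + 1)) ω - M n ω‖ ∂P ≤ c' * (P B).toReal := by
  haveI : SigmaFinite (P.trim (hF_le n)) := inferInstance
  have hint : Integrable (fun ω => |M (Function.update n l (n l + 1)) ω - M n ω|) P :=
    ((hM_int _).sub (hM_int n)).abs
  have h1 : ∫ ω in B, ‖M (Function.update n l (n l + 1)) ω - M n ω‖ ∂P
      = ∫ ω in B, (P[fun ω' => |M (Function.update n l (n l + 1)) ω' - M n ω'| | F n]) ω ∂P := by
    simp_rw [Real.norm_eq_abs]
    exact (setIntegral_condExp (hF_le n) hint hB).symm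
  rw [h1]
  have h2 : ∫ ω in B, (P[fun ω' => |M (Function.update n l (n l + 1)) ω' - M n ω'| | F n]) ω ∂P
      ≤ ∫ _ω in B, c' ∂P :=
    setIntegral_mono_ae integrable_condExp.integrableOn (integrableOn_const (measure_ne_top _ _))
      (hc' n l)
  refine h2.trans ?_
  rw [setIntegral_const, smul_eq_mul, mul_comm]
  exact le_rfl

lemma step_bound (hF_le : ∀ n, F n ≤ inst)
    (hF_mono : ∀ ⦃m n : Fin d → ℕ⦄, m ≤ n → F m ≤ F n)
    (hM_int : ∀ n, Integrable (M n) P) {c' : ℝ}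
    (hc' : ∀ (n : Fin d → ℕ) (l : Fin d), ∀ᵐ ω ∂P,
      (P[fun ω' => |M (Function.update n l (n l + 1)) ω' - M n ω'| | F n]) ω ≤ c')
    (k : ℕ) {B : Set Ω} (hB : MeasurableSet[F (fun _ => k)] B) :
    ∫ ω in B, ‖M (fun _ => k + 1) ω - M (fun _ => k) ω‖ ∂P ≤ d * c' * (P B).toReal := by
  have hBm : MeasurableSet B := hF_le _ _ hB
  set q : ℕ → Fin d → ℕ := fun r l => if (l : ℕ) < r then k + 1 else k with hq
  have hq0 : q 0 = fun _ => k := by funext l; simp [hq]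
  have hqd : q d = fun _ => k + 1 := by funext l; simp [hq, l.isLt]
  have htel : ∀ ω, M (fun _ => k + 1) ω - M (fun _ => k) ω
      = ∑ r ∈ Finset.range d, (M (q (r + 1)) ω - M (q r) ω) := by
    intro ω
    rw [Finset.sum_range_sub (fun r => M (q r) ω), hq0, hqd]
  have hcongr : ∫ ω in B, ‖M (fun _ => k + 1) ω - M (fun _ => k) ω‖ ∂P
      ≤ ∑ r ∈ Finset.range d, ∫ ω in B, ‖M (q (r + 1)) ω - M (q r) ω‖ ∂P := by
    have e1 : ∫ ω in B, ‖M (fun _ => k + 1) ω - M (fun _ => k) ω‖ ∂P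
        = ∫ ω in B, ‖∑ r ∈ Finset.range d, (M (q (r + 1)) ω - M (q r) ω)‖ ∂P := by
      exact integral_congr_ae (Filter.Eventually.of_forall fun ω => congrArg Norm.norm (htel ω))
    rw [e1]
    have e2 : ∫ ω in B, ‖∑ r ∈ Finset.range d, (M (q (r + 1)) ω - M (q r) ω)‖ ∂P
        ≤ ∫ ω in B, (∑ r ∈ Finset.range d, ‖M (q (r + 1)) ω - M (q r) ω‖) ∂P := by
      refine integral_mono ?_ ?_ ?_
      · exact (integrable_finset_sum _ fun r _ => (hM_int _).sub (hM_int _)).norm.integrableOn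
      · exact (integrable_finset_sum _ fun r _ => ((hM_int _).sub (hM_int _)).norm).integrableOn
      · intro ω
        exact norm_sum_le _ _
    refine e2.trans ?_
    rw [integral_finset_sum]
    intro r _
    exact ((hM_int _).sub (hM_int _)).norm.integrableOn
  refine hcongr.trans ?_
  have hone : ∀ r ∈ Finset.range d,
      ∫ ω in B, ‖M (q (r + 1)) ω - M (q r) ω‖ ∂P ≤ c' * (P B).toReal := by
    intro r hr
    have hrd : r < d := Finset.mem_range.1 hr
    have hupdate : q (r + 1) = Function.update (q r) ⟨r, hrd⟩ ((q r ⟨r, hrd⟩) + 1) := by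
      funext j
      rcases eq_or_ne j ⟨r, hrd⟩ with rfl | hj
      · rw [Function.update_self]
        simp only [hq]
        norm_num
      · rw [Function.update_of_ne hj]
        simp only [hq]
        have hjr : (j : ℕ) ≠ r := fun hc => hj (Fin.ext hc)
        exact if_congr (by omega) rfl rfl
    rw [hupdate]
    refine edge_bound hF_le hM_int hc' (q r) ⟨r, hrd⟩ (hF_mono ?_ _ hB)
    refine Pi.le_def.mpr fun l => ?_
    simp only [hq]
    split_ifs <;> omega
  calc ∑ r ∈ Finset.range d, ∫ ω in B, ‖M (q (r + 1)) ω - M (q r) ω‖ ∂P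
      ≤ ∑ _r ∈ Finset.range d, c' * (P B).toReal := Finset.sum_le_sum hone
    _ = d * c' * (P B).toReal := by
        rw [Finset.sum_const, Finset.card_range, nsmul_eq_mul, mul_assoc]

lemma norm_integral_stopped_le (hF_le : ∀ n, F n ≤ inst)
    (hF_mono : ∀ ⦃m n : Fin d → ℕ⦄, m ≤ n → F m ≤ F n)
    (hM_int : ∀ n, Integrable (M n) P)
    (hM_meas : ∀ n, Measurable[F n] (M n))
    (hM_mart : ∀ m n : Fin d → ℕ, m ≤ n → P[M n | F m] =ᵐ[P] M m)
    (hτ : ∀ n, MeasurableSet[F n] {ω | τ ω ≤ n})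
    (hσ : ∀ n, MeasurableSet[F n] {ω | σ ω ≤ n})
    (hτσ : ∀ ω, τ ω ≤ σ ω) {K : ℕ} (hσb : ∀ ω, σ ω ≤ fun _ => K) :
    ∫ ω, ‖M (τ ω) ω‖ ∂P ≤ ∫ ω, ‖M (σ ω) ω‖ ∂P := by
  have hτb : ∀ ω, τ ω ≤ fun _ => K := fun ω => le_trans (hτσ ω) (hσb ω)
  have hm : stoppedSigma F τ hτ ≤ inst := stoppedSigma_le hF_le hτ
  haveI : SigmaFinite (P.trim hm) := inferInstance
  have hσint : Integrable (fun ω => M (σ ω) ω) P :=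
    integrable_stopped_bdd hF_le hF_mono hM_int hσ hσb
  have hτint : Integrable (fun ω => M (τ ω) ω) P :=
    integrable_stopped_bdd hF_le hF_mono hM_int hτ hτb
  have hae : (fun ω => M (τ ω) ω) =ᵐ[P] P[fun ω => M (σ ω) ω | stoppedSigma F τ hτ] := by
    refine ae_eq_condExp_of_forall_setIntegral_eq hm hσint
      (fun s _ _ => hτint.integrableOn) (fun s hs _ => ?_) ?_
    · rw [setIntegral_stopped_eq hF_le hF_mono hM_int hM_mart hτ hτb hs,
        setIntegral_stopped_eq hF_le hF_mono hM_int hM_mart hσ hσb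
          (stoppedSigma_mono hτσ hτ hσ _ hs)]
    · exact ((measurable_stopped hF_mono hM_meas hτ).stronglyMeasurable).aestronglyMeasurable
  set g := fun ω => M (σ ω) ω with hg
  have habs : ∀ᵐ ω ∂P, ‖M (τ ω) ω‖ ≤ (P[fun ω => ‖g ω‖ | stoppedSigma F τ hτ]) ω := by
    have h1 : P[g | stoppedSigma F τ hτ] ≤ᵐ[P] P[fun ω => ‖g ω‖ | stoppedSigma F τ hτ] :=
      condExp_mono hσint hσint.norm (Filter.Eventually.of_forall fun ω => le_abs_self _)
    have h2 : P[fun ω => -g ω | stoppedSigma F τ hτ] ≤ᵐ[P] P[fun ω => ‖g ω‖ | stoppedSigma F τ hτ] :=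
      condExp_mono hσint.neg hσint.norm (Filter.Eventually.of_forall fun ω => neg_le_abs _)
    have h3 : P[fun ω => -g ω | stoppedSigma F τ hτ] =ᵐ[P] fun ω => -(P[g | stoppedSigma F τ hτ]) ω :=
      condExp_neg g _
    filter_upwards [hae, h1, h2, h3] with ω he hh1 hh2 hh3
    rw [Real.norm_eq_abs, he]
    rw [hh3] at hh2
    exact abs_le.mpr ⟨by linarith, hh1⟩
  have hmono : ∫ ω, ‖M (τ ω) ω‖ ∂P ≤ ∫ ω, (P[fun ω => ‖g ω‖ | stoppedSigma F τ hτ]) ω ∂P :=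
    integral_mono_ae hτint.norm integrable_condExp habs
  refine hmono.trans_eq ?_
  exact integral_condExp hm

lemma tele_min (f : ℕ → ℝ) (a k : ℕ) :
    f 0 + ∑ i ∈ Finset.range k, (if a ≤ i then 0 else f (i + 1) - f i) = f (min a k) := by
  induction k with
  | zero => simp
  | succ k ih =>
    rw [Finset.sum_range_succ, ← add_assoc, ih]
    by_cases h : a ≤ k
    · rw [if_pos h]
      have h1 : min a k = a := by omega
      have h2 : min a (k + 1) = a := by omega
      rw [h1, h2, add_zero]
    · rw [if_neg h]
      have h1 : min a k = k := by omega
      have h2 : min a (k + 1) = k + 1 := by omega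
      rw [h1, h2]
      ring

lemma summable_pk (hF_le : ∀ n, F n ≤ inst)
    (hγ : ∀ n, MeasurableSet[F n] {ω | γ ω ≤ n})
    (hγ_int : Integrable (fun ω => ∑ l : Fin d, (γ ω l : ℝ)) P) :
    Summable (fun k => (P ({ω | γ ω ≤ (fun _ => k : Fin d → ℕ)}ᶜ)).toReal) := by
  have hmeas : ∀ k : ℕ, MeasurableSet ({ω | γ ω ≤ (fun _ => k : Fin d → ℕ)}ᶜ) :=
    fun k => (hF_le _ _ (hγ _)).compl
  refine summable_of_sum_range_le (c := ∫ ω, (∑ l : Fin d, (γ ω l : ℝ)) ∂P)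
    (fun k => ENNReal.toReal_nonneg) fun j => ?_
  have heq : ∀ k : ℕ, (P ({ω | γ ω ≤ (fun _ => k : Fin d → ℕ)}ᶜ)).toReal
      = ∫ ω, Set.indicator ({ω' | γ ω' ≤ (fun _ => k : Fin d → ℕ)}ᶜ) (fun _ => (1 : ℝ)) ω ∂P := by
    intro k
    rw [integral_indicator_const (1 : ℝ) (hmeas k), smul_eq_mul, mul_one]
    rfl
  have hsum : ∑ k ∈ Finset.range j, (P ({ω | γ ω ≤ (fun _ => k : Fin d → ℕ)}ᶜ)).toReal
      = ∫ ω, (∑ k ∈ Finset.range j,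
          Set.indicator ({ω' | γ ω' ≤ (fun _ => k : Fin d → ℕ)}ᶜ) (fun _ => (1 : ℝ)) ω) ∂P := by
    rw [integral_finset_sum]
    · exact Finset.sum_congr rfl fun k _ => heq k
    · exact fun k _ => (integrable_const (1 : ℝ)).indicator (hmeas k)
  rw [hsum]
  refine integral_mono (integrable_finset_sum _ fun k _ =>
    (integrable_const (1 : ℝ)).indicator (hmeas k)) hγ_int fun ω => ?_
  calc ∑ k ∈ Finset.range j,
        Set.indicator ({ω' | γ ω' ≤ (fun _ => k : Fin d → ℕ)}ᶜ) (fun _ => (1 : ℝ)) ω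
      ≤ ∑ k ∈ Finset.range j, ∑ l : Fin d, (if k < γ ω l then (1 : ℝ) else 0) := by
        refine Finset.sum_le_sum fun k _ => ?_
        by_cases hk : ω ∈ ({ω' | γ ω' ≤ (fun _ => k : Fin d → ℕ)}ᶜ)
        · rw [Set.indicator_of_mem hk]
          obtain ⟨l0, hl0⟩ : ∃ l0, k < γ ω l0 := by
            by_contra hcon
            push_neg at hcon
            exact hk (Pi.le_def.mpr fun l => hcon l)
          have h6 := Finset.single_le_sum (f := fun l => if k < γ ω l then (1 : ℝ) else 0)
            (fun l _ => by positivity) (Finset.mem_univ l0)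
          beta_reduce at h6
          rw [if_pos hl0] at h6
          exact h6
        · rw [Set.indicator_of_notMem hk]
          exact Finset.sum_nonneg fun l _ => by positivity
    _ = ∑ l : Fin d, ∑ k ∈ Finset.range j, (if k < γ ω l then (1 : ℝ) else 0) :=
        Finset.sum_comm
    _ ≤ ∑ l : Fin d, (γ ω l : ℝ) := by
        refine Finset.sum_le_sum fun l _ => ?_
        rw [Finset.sum_boole]
        have hsub : (Finset.range j).filter (fun k => k < γ ω l) ⊆ Finset.range (γ ω l) := by
          intro k hk
          rw [Finset.mem_range]
          exact (Finset.mem_filter.1 hk).2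
        have := Finset.card_le_card hsub
        rw [Finset.card_range] at this
        exact_mod_cast this

lemma integral_norm_zeta_le (hF_le : ∀ n, F n ≤ inst)
    (hF_mono : ∀ ⦃m n : Fin d → ℕ⦄, m ≤ n → F m ≤ F n)
    (hM_int : ∀ n, Integrable (M n) P) {c' : ℝ}
    (hc' : ∀ (n : Fin d → ℕ) (l : Fin d), ∀ᵐ ω ∂P,
      (P[fun ω' => |M (Function.update n l (n l + 1)) ω' - M n ω'| | F n]) ω ≤ c')
    (hc'0 : 0 ≤ c')
    (hγ : ∀ n, MeasurableSet[F n] {ω | γ ω ≤ n})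
    (hγ_int : Integrable (fun ω => ∑ l : Fin d, (γ ω l : ℝ)) P) (k : ℕ) :
    ∫ ω, ‖M (zeta γ k ω) ω‖ ∂P ≤ ∫ ω, ‖M (fun _ => 0) ω‖ ∂P
      + d * c' * (∑' i, (P ({ω | γ ω ≤ (fun _ => i : Fin d → ℕ)}ᶜ)).toReal) := by
  have hmeasc : ∀ i : ℕ, MeasurableSet ({ω | γ ω ≤ (fun _ => i : Fin d → ℕ)}ᶜ) :=
    fun i => (hF_le _ _ (hγ _)).compl
  set g : ℕ → Ω → ℝ := fun i ω => Set.indicator ({ω' | γ ω' ≤ (fun _ => i : Fin d → ℕ)}ᶜ)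
      (fun ω' => M (fun _ => i + 1) ω' - M (fun _ => i) ω') ω with hgdef
  have hg_int : ∀ i, Integrable (g i) P :=
    fun i => ((hM_int _).sub (hM_int _)).indicator (hmeasc i)
  have hpt : ∀ ω, M (zeta γ k ω) ω = M (fun _ => 0) ω + ∑ i ∈ Finset.range k, g i ω := by
    intro ω
    have h1 := tele_min (fun i => M (fun _ => i) ω) (mx γ ω) k
    have h2 : ∑ i ∈ Finset.range k,
        (if mx γ ω ≤ i then 0 else M (fun _ => i + 1) ω - M (fun _ => i) ω)
        = ∑ i ∈ Finset.range k, g i ω := by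
      refine Finset.sum_congr rfl fun i _ => ?_
      by_cases h : γ ω ≤ (fun _ => i : Fin d → ℕ)
      · rw [if_pos (mx_le_iff.mpr h)]
        exact (Set.indicator_of_notMem
          (show ω ∉ {ω' | γ ω' ≤ (fun _ => i : Fin d → ℕ)}ᶜ from fun hmem => hmem h)
          (fun ω' => M (fun _ => i + 1) ω' - M (fun _ => i) ω')).symm
      · rw [if_neg (fun hc => h (mx_le_iff.mp hc))]
        exact (Set.indicator_of_mem
          (show ω ∈ {ω' | γ ω' ≤ (fun _ => i : Fin d → ℕ)}ᶜ from h)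
          (fun ω' => M (fun _ => i + 1) ω' - M (fun _ => i) ω')).symm
    rw [h2] at h1
    exact (h1.symm).trans rfl
  have hζint : Integrable (fun ω => M (zeta γ k ω) ω) P :=
    integrable_stopped_bdd hF_le hF_mono hM_int (zeta_stop hF_mono hγ k) (zeta_le_const k)
  have hstep : ∫ ω, ‖M (zeta γ k ω) ω‖ ∂P
      ≤ ∫ ω, (‖M (fun _ => 0) ω‖ + ∑ i ∈ Finset.range k, ‖g i ω‖) ∂P := by
    refine integral_mono hζint.norm
      ((hM_int _).norm.add (integrable_finset_sum _ fun i _ => (hg_int i).norm)) fun ω => ?_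
    rw [hpt ω]
    exact (norm_add_le _ _).trans (add_le_add_right (norm_sum_le _ _) _)
  refine hstep.trans ?_
  rw [integral_add (hM_int _).norm (integrable_finset_sum _ fun i _ => (hg_int i).norm),
    integral_finset_sum _ fun i _ => (hg_int i).norm]
  refine add_le_add_right ?_ _
  have hbound : ∀ i : ℕ, ∫ ω, ‖g i ω‖ ∂P
      ≤ d * c' * (P ({ω | γ ω ≤ (fun _ => i : Fin d → ℕ)}ᶜ)).toReal := by
    intro i
    have he : ∀ ω, ‖g i ω‖ = Set.indicator ({ω' | γ ω' ≤ (fun _ => i : Fin d → ℕ)}ᶜ)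
        (fun ω' => ‖M (fun _ => i + 1) ω' - M (fun _ => i) ω'‖) ω := by
      intro ω
      rw [hgdef]
      exact norm_indicator_eq_indicator_norm _ _
    calc ∫ ω, ‖g i ω‖ ∂P
        = ∫ ω, Set.indicator ({ω' | γ ω' ≤ (fun _ => i : Fin d → ℕ)}ᶜ)
            (fun ω' => ‖M (fun _ => i + 1) ω' - M (fun _ => i) ω'‖) ω ∂P :=
          integral_congr_ae (Filter.Eventually.of_forall he)
      _ = ∫ ω in ({ω' | γ ω' ≤ (fun _ => i : Fin d → ℕ)}ᶜ),
            ‖M (fun _ => i + 1) ω - M (fun _ => i) ω‖ ∂P := integral_indicator (hmeasc i)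
      _ ≤ d * c' * (P ({ω | γ ω ≤ (fun _ => i : Fin d → ℕ)}ᶜ)).toReal :=
          step_bound hF_le hF_mono hM_int hc' i ((hγ _).compl)
  calc ∑ i ∈ Finset.range k, ∫ ω, ‖g i ω‖ ∂P
      ≤ ∑ i ∈ Finset.range k,
          d * c' * (P ({ω | γ ω ≤ (fun _ => i : Fin d → ℕ)}ᶜ)).toReal :=
        Finset.sum_le_sum fun i _ => hbound i
    _ ≤ d * c' * (∑' i, (P ({ω | γ ω ≤ (fun _ => i : Fin d → ℕ)}ᶜ)).toReal) := by
        rw [← Finset.mul_sum]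
        refine mul_le_mul_of_nonneg_left ?_ (by positivity)
        exact Summable.sum_le_tsum _ (fun i _ => ENNReal.toReal_nonneg)
          (summable_pk hF_le hγ hγ_int)

lemma tail_tendsto (hF_le : ∀ n, F n ≤ inst)
    (hF_mono : ∀ ⦃m n : Fin d → ℕ⦄, m ≤ n → F m ≤ F n)
    (hM_int : ∀ n, Integrable (M n) P) {c' : ℝ}
    (hc' : ∀ (n : Fin d → ℕ) (l : Fin d), ∀ᵐ ω ∂P,
      (P[fun ω' => |M (Function.update n l (n l + 1)) ω' - M n ω'| | F n]) ω ≤ c')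
    (hc'0 : 0 ≤ c')
    (hγ : ∀ n, MeasurableSet[F n] {ω | γ ω ≤ n})
    (hγ_int : Integrable (fun ω => ∑ l : Fin d, (γ ω l : ℝ)) P) :
    Filter.Tendsto
      (fun k => ∫ ω in ({ω' | γ ω' ≤ (fun _ => k : Fin d → ℕ)}ᶜ), ‖M (fun _ => k) ω‖ ∂P)
      Filter.atTop (nhds 0) := by
  classical
  have hmeasc : ∀ i : ℕ, MeasurableSet ({ω | γ ω ≤ (fun _ => i : Fin d → ℕ)}ᶜ) :=
    fun i => (hF_le _ _ (hγ _)).compl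
  set pk : ℕ → ℝ := fun i => (P ({ω | γ ω ≤ (fun _ => i : Fin d → ℕ)}ᶜ)).toReal with hpk
  have hsum : Summable pk := summable_pk hF_le hγ hγ_int
  have hsum' : Summable (fun i => d * c' * pk i) := hsum.mul_left _
  set S : ℝ := ∑' i, d * c' * pk i with hS
  set sums : ℕ → ℝ := fun j => ∑ i ∈ Finset.range j, d * c' * pk i with hsums
  have hsums_le : ∀ j, sums j ≤ S :=
    fun j => Summable.sum_le_tsum _ (fun i _ => by positivity) hsum'
  have htends : Filter.Tendsto sums Filter.atTop (nhds S) := hsum'.hasSum.tendsto_sum_nat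
  have htail_nonneg : ∀ k, 0 ≤ ∫ ω in ({ω' | γ ω' ≤ (fun _ => k : Fin d → ℕ)}ᶜ),
      ‖M (fun _ => k) ω‖ ∂P :=
    fun k => setIntegral_nonneg (hmeasc k) fun ω _ => norm_nonneg _
  rw [Metric.tendsto_atTop]
  intro ε hε
  -- choose j such that the series tail is < ε/2
  obtain ⟨j, hj⟩ : ∃ j, S - sums j < ε / 2 := by
    have := Metric.tendsto_atTop.mp htends (ε / 2) (by linarith)
    obtain ⟨j, hj⟩ := this
    refine ⟨j, ?_⟩
    have := hj j le_rfl
    rw [Real.dist_eq] at this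
    have h2 := abs_lt.mp this
    linarith [h2.1]
  -- dominated convergence for the fixed index j
  have hdom : Filter.Tendsto
      (fun k => ∫ ω in ({ω' | γ ω' ≤ (fun _ => k : Fin d → ℕ)}ᶜ), ‖M (fun _ => j) ω‖ ∂P)
      Filter.atTop (nhds 0) := by
    have h0 : Filter.Tendsto
        (fun k => ∫ ω, Set.indicator ({ω' | γ ω' ≤ (fun _ => k : Fin d → ℕ)}ᶜ)
          (fun ω' => ‖M (fun _ => j) ω'‖) ω ∂P) Filter.atTop (nhds (∫ _ω, (0 : ℝ) ∂P)) := by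
      refine tendsto_integral_of_dominated_convergence (fun ω => ‖M (fun _ => j) ω‖)
        (fun k => ((hM_int _).norm.aestronglyMeasurable).indicator (hmeasc k))
        (hM_int _).norm (fun k => Filter.Eventually.of_forall fun ω => ?_)
        (Filter.Eventually.of_forall fun ω => ?_)
      · exact (norm_indicator_le_norm_self _ _).trans (le_of_eq (norm_norm _))
      · refine Filter.Tendsto.congr' ?_ tendsto_const_nhds
        filter_upwards [Filter.eventually_ge_atTop (mx γ ω)] with k hk
        exact (Set.indicator_of_notMem
          (show ω ∉ {ω' | γ ω' ≤ (fun _ => k : Fin d → ℕ)}ᶜ from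
            fun hmem => hmem (mx_le_iff.mp hk)) _).symm
    rw [integral_zero] at h0
    refine h0.congr fun k => integral_indicator (hmeasc k)
  obtain ⟨N0, hN0⟩ := Metric.tendsto_atTop.mp hdom (ε / 2) (by linarith)
  refine ⟨max j N0, fun k hk => ?_⟩
  have hjk : j ≤ k := le_trans (le_max_left _ _) hk
  have hNk : N0 ≤ k := le_trans (le_max_right _ _) hk
  -- pointwise telescoping bound
  have hptle : ∀ ω, ‖M (fun _ => k) ω‖ ≤ ‖M (fun _ => j) ω‖
      + ∑ i ∈ Finset.Ico j k, ‖M (fun _ => i + 1) ω - M (fun _ => i) ω‖ := by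
    intro ω
    have htel : ∑ i ∈ Finset.Ico j k, (M (fun _ => i + 1) ω - M (fun _ => i) ω)
        = M (fun _ => k) ω - M (fun _ => j) ω := by
      rw [Finset.sum_Ico_eq_sub _ hjk, Finset.sum_range_sub (fun i => M (fun _ => i) ω),
        Finset.sum_range_sub (fun i => M (fun _ => i) ω)]
      ring
    have : M (fun _ => k) ω = M (fun _ => j) ω
        + ∑ i ∈ Finset.Ico j k, (M (fun _ => i + 1) ω - M (fun _ => i) ω) := by
      rw [htel]; ring
    rw [this]
    exact (norm_add_le _ _).trans (add_le_add_right (norm_sum_le _ _) _)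
  have hstep1 : ∫ ω in ({ω' | γ ω' ≤ (fun _ => k : Fin d → ℕ)}ᶜ), ‖M (fun _ => k) ω‖ ∂P
      ≤ ∫ ω in ({ω' | γ ω' ≤ (fun _ => k : Fin d → ℕ)}ᶜ), (‖M (fun _ => j) ω‖
        + ∑ i ∈ Finset.Ico j k, ‖M (fun _ => i + 1) ω - M (fun _ => i) ω‖) ∂P := by
    refine setIntegral_mono_ae (hM_int _).norm.integrableOn
      (((hM_int _).norm.add (integrable_finset_sum _ fun i _ =>
        ((hM_int _).sub (hM_int _)).norm)).integrableOn)
      (Filter.Eventually.of_forall hptle)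
  have hstep2 : ∫ ω in ({ω' | γ ω' ≤ (fun _ => k : Fin d → ℕ)}ᶜ), (‖M (fun _ => j) ω‖
        + ∑ i ∈ Finset.Ico j k, ‖M (fun _ => i + 1) ω - M (fun _ => i) ω‖) ∂P
      = ∫ ω in ({ω' | γ ω' ≤ (fun _ => k : Fin d → ℕ)}ᶜ), ‖M (fun _ => j) ω‖ ∂P
        + ∑ i ∈ Finset.Ico j k, ∫ ω in ({ω' | γ ω' ≤ (fun _ => k : Fin d → ℕ)}ᶜ),
            ‖M (fun _ => i + 1) ω - M (fun _ => i) ω‖ ∂P := by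
    have hint1 : IntegrableOn (fun ω => ‖M (fun _ => j : Fin d → ℕ) ω‖)
        ({ω' | γ ω' ≤ (fun _ => k : Fin d → ℕ)}ᶜ) P := (hM_int _).norm.integrableOn
    have hint2 : IntegrableOn (fun ω => ∑ i ∈ Finset.Ico j k,
          ‖M (fun _ => i + 1 : Fin d → ℕ) ω - M (fun _ => i : Fin d → ℕ) ω‖)
        ({ω' | γ ω' ≤ (fun _ => k : Fin d → ℕ)}ᶜ) P :=
      (integrable_finset_sum _ fun i _ =>
        ((hM_int (fun _ => i + 1)).sub (hM_int (fun _ => i))).norm).integrableOn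
    have hdint : ∀ i : ℕ, IntegrableOn
        (fun ω => ‖M (fun _ => i + 1 : Fin d → ℕ) ω - M (fun _ => i : Fin d → ℕ) ω‖)
        ({ω' | γ ω' ≤ (fun _ => k : Fin d → ℕ)}ᶜ) P :=
      fun i => (((hM_int _).sub (hM_int _)).norm).integrableOn
    rw [integral_add hint1 hint2, integral_finset_sum _ fun i _ => hdint i]
  have hstep3 : ∀ i ∈ Finset.Ico j k,
      ∫ ω in ({ω' | γ ω' ≤ (fun _ => k : Fin d → ℕ)}ᶜ),
          ‖M (fun _ => i + 1) ω - M (fun _ => i) ω‖ ∂P ≤ d * c' * pk i := by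
    intro i hi
    have hik : i ≤ k := le_of_lt (Finset.mem_Ico.mp hi).2
    have hsub : ({ω' | γ ω' ≤ (fun _ => k : Fin d → ℕ)}ᶜ : Set Ω)
        ⊆ ({ω' | γ ω' ≤ (fun _ => i : Fin d → ℕ)}ᶜ) := by
      intro ω hω hcon
      exact hω (le_trans hcon (Pi.le_def.mpr fun l => hik))
    have h1 : ∫ ω in ({ω' | γ ω' ≤ (fun _ => k : Fin d → ℕ)}ᶜ),
          ‖M (fun _ => i + 1) ω - M (fun _ => i) ω‖ ∂P
        ≤ ∫ ω in ({ω' | γ ω' ≤ (fun _ => i : Fin d → ℕ)}ᶜ),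
          ‖M (fun _ => i + 1) ω - M (fun _ => i) ω‖ ∂P :=
      setIntegral_mono_set (((hM_int _).sub (hM_int _)).norm).integrableOn
        (Filter.Eventually.of_forall fun ω => norm_nonneg _)
        (Filter.Eventually.of_forall hsub)
    exact h1.trans (step_bound hF_le hF_mono hM_int hc' i ((hγ _).compl))
  have hmid : ∑ i ∈ Finset.Ico j k, (d * c' * pk i) = sums k - sums j :=
    Finset.sum_Ico_eq_sub _ hjk
  have hfirst := hN0 k hNk
  rw [Real.dist_eq, sub_zero,
    abs_of_nonneg (setIntegral_nonneg (hmeasc k) fun ω _ => norm_nonneg _)] at hfirst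
  rw [Real.dist_eq, sub_zero, abs_of_nonneg (htail_nonneg k)]
  calc ∫ ω in ({ω' | γ ω' ≤ (fun _ => k : Fin d → ℕ)}ᶜ), ‖M (fun _ => k) ω‖ ∂P
      ≤ ∫ ω in ({ω' | γ ω' ≤ (fun _ => k : Fin d → ℕ)}ᶜ), ‖M (fun _ => j) ω‖ ∂P
        + ∑ i ∈ Finset.Ico j k, ∫ ω in ({ω' | γ ω' ≤ (fun _ => k : Fin d → ℕ)}ᶜ),
            ‖M (fun _ => i + 1) ω - M (fun _ => i) ω‖ ∂P := hstep1.trans (le_of_eq hstep2)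
    _ ≤ ∫ ω in ({ω' | γ ω' ≤ (fun _ => k : Fin d → ℕ)}ᶜ), ‖M (fun _ => j) ω‖ ∂P
        + ∑ i ∈ Finset.Ico j k, (d * c' * pk i) := by
        exact add_le_add_right (Finset.sum_le_sum hstep3) _
    _ < ε / 2 + (sums k - sums j) := by
        rw [hmid]
        exact add_lt_add_of_lt_of_le hfirst le_rfl
    _ ≤ ε / 2 + (S - sums j) := by
        have := hsums_le k
        linarith
    _ < ε := by linarith

lemma key (hF_le : ∀ n, F n ≤ inst)
    (hF_mono : ∀ ⦃m n : Fin d → ℕ⦄, m ≤ n → F m ≤ F n)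
    (hM_int : ∀ n, Integrable (M n) P)
    (hM_meas : ∀ n, Measurable[F n] (M n))
    (hM_mart : ∀ m n : Fin d → ℕ, m ≤ n → P[M n | F m] =ᵐ[P] M m) {c' : ℝ}
    (hc' : ∀ (n : Fin d → ℕ) (l : Fin d), ∀ᵐ ω ∂P,
      (P[fun ω' => |M (Function.update n l (n l + 1)) ω' - M n ω'| | F n]) ω ≤ c')
    (hc'0 : 0 ≤ c')
    (hγ : ∀ n, MeasurableSet[F n] {ω | γ ω ≤ n})
    (hγ_int : Integrable (fun ω => ∑ l : Fin d, (γ ω l : ℝ)) P) :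
    Integrable (fun ω => M (γ ω) ω) P ∧
    Filter.Tendsto (fun k => ∫ ω, ‖M (trunc γ k ω) ω - M (γ ω) ω‖ ∂P)
      Filter.atTop (nhds 0) := by
  have hmeasc : ∀ i : ℕ, MeasurableSet ({ω | γ ω ≤ (fun _ => i : Fin d → ℕ)}ᶜ) :=
    fun i => (hF_le _ _ (hγ _)).compl
  set C : ℝ := ∫ ω, ‖M (fun _ => 0) ω‖ ∂P
    + d * c' * (∑' i, (P ({ω | γ ω ≤ (fun _ => i : Fin d → ℕ)}ᶜ)).toReal) with hC
  have htr_int : ∀ k : ℕ, Integrable (fun ω => M (trunc γ k ω) ω) P := fun k =>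
    integrable_stopped_bdd hF_le hF_mono hM_int (trunc_stop hF_mono hγ k) (trunc_le_const k)
  -- uniform L¹ bound on the truncated processes
  have hub : ∀ k : ℕ, ∫ ω, ‖M (trunc γ k ω) ω‖ ∂P ≤ C := by
    intro k
    refine le_trans ?_ (integral_norm_zeta_le hF_le hF_mono hM_int hc' hc'0 hγ hγ_int k)
    exact norm_integral_stopped_le hF_le hF_mono hM_int hM_meas hM_mart
      (trunc_stop hF_mono hγ k) (zeta_stop hF_mono hγ k) (trunc_le_zeta k) (zeta_le_const k)
  -- integrability of the stopped process
  have hf_meas : Measurable (fun ω => M (γ ω) ω) :=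
    (measurable_stopped hF_mono hM_meas hγ).mono (stoppedSigma_le hF_le hγ) le_rfl
  have htrk_meas : ∀ k : ℕ, Measurable (fun ω => M (trunc γ k ω) ω) := fun k =>
    (measurable_stopped hF_mono hM_meas (trunc_stop hF_mono hγ k)).mono
      (stoppedSigma_le hF_le (trunc_stop hF_mono hγ k)) le_rfl
  have hf_int : Integrable (fun ω => M (γ ω) ω) P := by
    refine ⟨hf_meas.aestronglyMeasurable, ?_⟩
    have hlim : ∀ ω, Filter.Tendsto (fun k => (‖M (trunc γ k ω) ω‖₊ : ENNReal))
        Filter.atTop (nhds (‖M (γ ω) ω‖₊ : ENNReal)) := by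
      intro ω
      refine Filter.Tendsto.congr' ?_ tendsto_const_nhds
      filter_upwards [Filter.eventually_ge_atTop (mx γ ω)] with k hk
      rw [trunc_of_le (mx_le_iff.mp hk)]
    have h1 : ∫⁻ ω, (‖M (γ ω) ω‖₊ : ENNReal) ∂P
        = ∫⁻ ω, Filter.liminf (fun k => (‖M (trunc γ k ω) ω‖₊ : ENNReal)) Filter.atTop ∂P :=
      lintegral_congr fun ω => ((hlim ω).liminf_eq).symm
    have h2 : ∫⁻ ω, Filter.liminf (fun k => (‖M (trunc γ k ω) ω‖₊ : ENNReal)) Filter.atTop ∂P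
        ≤ Filter.liminf (fun k => ∫⁻ ω, (‖M (trunc γ k ω) ω‖₊ : ENNReal) ∂P) Filter.atTop :=
      lintegral_liminf_le fun k => (htrk_meas k).nnnorm.coe_nnreal_ennreal
    have h3 : ∀ k : ℕ, ∫⁻ ω, (‖M (trunc γ k ω) ω‖₊ : ENNReal) ∂P ≤ ENNReal.ofReal C := by
      intro k
      refine (le_of_eq (ofReal_integral_norm_eq_lintegral_enorm (htr_int k)).symm).trans ?_
      exact ENNReal.ofReal_le_ofReal (hub k)
    have h4 : Filter.liminf (fun k => ∫⁻ ω, (‖M (trunc γ k ω) ω‖₊ : ENNReal) ∂P) Filter.atTop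
        ≤ ENNReal.ofReal C := by
      refine le_trans (Filter.liminf_le_liminf (Filter.Eventually.of_forall h3)) ?_
      rw [Filter.liminf_const]
    show (∫⁻ ω, (‖M (γ ω) ω‖₊ : ENNReal) ∂P) < ⊤
    rw [h1]
    exact lt_of_le_of_lt (h2.trans h4) ENNReal.ofReal_lt_top
  refine ⟨hf_int, ?_⟩
  -- the tail of the stopped process tends to zero
  have hrest : Filter.Tendsto
      (fun k => ∫ ω in ({ω' | γ ω' ≤ (fun _ => k : Fin d → ℕ)}ᶜ), ‖M (γ ω) ω‖ ∂P)
      Filter.atTop (nhds 0) := by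
    have h0 : Filter.Tendsto
        (fun k => ∫ ω, Set.indicator ({ω' | γ ω' ≤ (fun _ => k : Fin d → ℕ)}ᶜ)
          (fun ω' => ‖M (γ ω') ω'‖) ω ∂P) Filter.atTop (nhds (∫ _ω, (0 : ℝ) ∂P)) := by
      refine tendsto_integral_of_dominated_convergence (fun ω => ‖M (γ ω) ω‖)
        (fun k => (hf_int.norm.aestronglyMeasurable).indicator (hmeasc k))
        hf_int.norm (fun k => Filter.Eventually.of_forall fun ω => ?_)
        (Filter.Eventually.of_forall fun ω => ?_)
      · exact (norm_indicator_le_norm_self _ _).trans (le_of_eq (norm_norm _))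
      · refine Filter.Tendsto.congr' ?_ tendsto_const_nhds
        filter_upwards [Filter.eventually_ge_atTop (mx γ ω)] with k hk
        exact (Set.indicator_of_notMem
          (show ω ∉ {ω' | γ ω' ≤ (fun _ => k : Fin d → ℕ)}ᶜ from
            fun hmem => hmem (mx_le_iff.mp hk)) _).symm
    rw [integral_zero] at h0
    refine h0.congr fun k => integral_indicator (hmeasc k)
  have htail := tail_tendsto hF_le hF_mono hM_int hc' hc'0 hγ hγ_int
  -- the difference bound
  have hdiffle : ∀ k : ℕ, ∫ ω, ‖M (trunc γ k ω) ω - M (γ ω) ω‖ ∂P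
      ≤ (∫ ω in ({ω' | γ ω' ≤ (fun _ => k : Fin d → ℕ)}ᶜ), ‖M (fun _ => k) ω‖ ∂P)
        + ∫ ω in ({ω' | γ ω' ≤ (fun _ => k : Fin d → ℕ)}ᶜ), ‖M (γ ω) ω‖ ∂P := by
    intro k
    have hpt : ∀ ω, ‖M (trunc γ k ω) ω - M (γ ω) ω‖
        ≤ Set.indicator ({ω' | γ ω' ≤ (fun _ => k : Fin d → ℕ)}ᶜ)
            (fun ω' => ‖M (fun _ => k) ω'‖ + ‖M (γ ω') ω'‖) ω := by
      intro ω
      by_cases h : γ ω ≤ (fun _ => k : Fin d → ℕ)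
      · rw [trunc_of_le h, sub_self, norm_zero]
        exact Set.indicator_nonneg (fun ω' _ => by positivity) ω
      · rw [trunc_of_not_le h, Set.indicator_of_mem
          (show ω ∈ {ω' | γ ω' ≤ (fun _ => k : Fin d → ℕ)}ᶜ from h)]
        exact norm_sub_le _ _
    have hint1 : Integrable (fun ω => ‖M (fun _ => k : Fin d → ℕ) ω‖ + ‖M (γ ω) ω‖) P :=
      (hM_int _).norm.add hf_int.norm
    calc ∫ ω, ‖M (trunc γ k ω) ω - M (γ ω) ω‖ ∂P
        ≤ ∫ ω, Set.indicator ({ω' | γ ω' ≤ (fun _ => k : Fin d → ℕ)}ᶜ)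
            (fun ω' => ‖M (fun _ => k) ω'‖ + ‖M (γ ω') ω'‖) ω ∂P := by
          refine integral_mono ((htr_int k).sub hf_int).norm
            (hint1.indicator (hmeasc k)) hpt
      _ = ∫ ω in ({ω' | γ ω' ≤ (fun _ => k : Fin d → ℕ)}ᶜ),
            (‖M (fun _ => k) ω‖ + ‖M (γ ω) ω‖) ∂P := integral_indicator (hmeasc k)
      _ = (∫ ω in ({ω' | γ ω' ≤ (fun _ => k : Fin d → ℕ)}ᶜ), ‖M (fun _ => k) ω‖ ∂P)
            + ∫ ω in ({ω' | γ ω' ≤ (fun _ => k : Fin d → ℕ)}ᶜ), ‖M (γ ω) ω‖ ∂P :=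
          integral_add ((hM_int _).norm.integrableOn) (hf_int.norm.integrableOn)
  have hzero : Filter.Tendsto
      (fun k => (∫ ω in ({ω' | γ ω' ≤ (fun _ => k : Fin d → ℕ)}ᶜ), ‖M (fun _ => k) ω‖ ∂P)
        + ∫ ω in ({ω' | γ ω' ≤ (fun _ => k : Fin d → ℕ)}ᶜ), ‖M (γ ω) ω‖ ∂P)
      Filter.atTop (nhds 0) := by
    have := htail.add hrest
    rwa [add_zero] at this
  exact squeeze_zero (fun k => integral_nonneg fun ω => norm_nonneg _) hdiffle hzero

end Aux

/-- multiparameter optional sampling: if `M` is an `F`-martingale indexed by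
`ℕ^d` with uniformly bounded conditional increments, and `(ρ(t))_{t ≥ 0}` is a nondecreasing
family of `ℕ^d`-valued `F`-stopping times with `E[∑_l ρ_l(t)] < ∞`, then
`N(t) := M(ρ(t))` is a martingale for the filtration `G(t) := F(ρ(t))`. -/
theorem stmt6 [inst : MeasurableSpace Ω] (P : Measure Ω) [IsProbabilityMeasure P]
    (F : (Fin d → ℕ) → MeasurableSpace Ω)
    (hF_le : ∀ n, F n ≤ inst)
    (hF_mono : ∀ ⦃m n : Fin d → ℕ⦄, m ≤ n → F m ≤ F n)
    (M : (Fin d → ℕ) → Ω → ℝ)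
    (hM_int : ∀ n, Integrable (M n) P)
    (hM_meas : ∀ n, Measurable[F n] (M n))
    (hM_mart : ∀ m n : Fin d → ℕ, m ≤ n → P[M n | F m] =ᵐ[P] M m)
    (c : ℝ)
    (hc : ∀ (n : Fin d → ℕ) (l : Fin d),
      ∀ᵐ ω ∂P,
        (P[fun ω' => |M (Function.update n l (n l + 1)) ω' - M n ω'| | F n]) ω ≤ c)
    (ρ : ℝ≥0 → Ω → Fin d → ℕ)
    (hρ_stop : ∀ t : ℝ≥0, ∀ n, MeasurableSet[F n] {ω | ρ t ω ≤ n})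
    (hρ_mono : ∀ ω, ∀ ⦃s t : ℝ≥0⦄, s ≤ t → ρ s ω ≤ ρ t ω)
    (hρ_int : ∀ t : ℝ≥0, Integrable (fun ω => ∑ l : Fin d, (ρ t ω l : ℝ)) P) :
    (∀ t : ℝ≥0,
      Integrable (fun ω => M (ρ t ω) ω) P ∧
      Measurable[stoppedSigma F (ρ t) (hρ_stop t)] (fun ω => M (ρ t ω) ω)) ∧
    (∀ s t : ℝ≥0, s ≤ t →
      P[fun ω => M (ρ t ω) ω | stoppedSigma F (ρ s) (hρ_stop s)] =ᵐ[P]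
        fun ω => M (ρ s ω) ω) := by
  have hc' : ∀ (n : Fin d → ℕ) (l : Fin d), ∀ᵐ ω ∂P,
      (P[fun ω' => |M (Function.update n l (n l + 1)) ω' - M n ω'| | F n]) ω ≤ max c 0 :=
    fun n l => (hc n l).mono fun ω h => h.trans (le_max_left _ _)
  have hc'0 : (0 : ℝ) ≤ max c 0 := le_max_right _ _
  have hkey := fun t : ℝ≥0 => key hF_le hF_mono hM_int hM_meas hM_mart hc' hc'0
    (hρ_stop t) (hρ_int t)
  constructor
  · exact fun t => ⟨(hkey t).1, measurable_stopped hF_mono hM_meas (hρ_stop t)⟩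
  intro s t hst
  have hsts : ∀ ω, ρ s ω ≤ ρ t ω := fun ω => hρ_mono ω hst
  have hm : stoppedSigma F (ρ s) (hρ_stop s) ≤ inst := stoppedSigma_le hF_le (hρ_stop s)
  haveI : SigmaFinite (P.trim hm) := inferInstance
  refine (ae_eq_condExp_of_forall_setIntegral_eq hm (hkey t).1
    (fun A hA _ => (hkey s).1.integrableOn) (fun A hA _ => ?_)
    ((measurable_stopped hF_mono hM_meas (hρ_stop s)).stronglyMeasurable.aestronglyMeasurable)).symm
  -- goal : ∫ ω in A, M (ρ s ω) ω ∂P = ∫ ω in A, M (ρ t ω) ω ∂P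
  have hAmeas : MeasurableSet A := stoppedSigma_le hF_le (hρ_stop s) _ hA
  have hAjm : ∀ j : ℕ,
      MeasurableSet (A ∩ {ω' | ρ s ω' ≤ (fun _ => j : Fin d → ℕ)}) := fun j =>
    hAmeas.inter (hF_le _ _ (hρ_stop s _))
  have hAj : ∀ j : ℕ,
      ∫ ω in A ∩ {ω' | ρ s ω' ≤ (fun _ => j : Fin d → ℕ)}, M (ρ s ω) ω ∂P
        = ∫ ω in A ∩ {ω' | ρ s ω' ≤ (fun _ => j : Fin d → ℕ)}, M (ρ t ω) ω ∂P := by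
    intro j
    set Aj := A ∩ {ω' | ρ s ω' ≤ (fun _ => j : Fin d → ℕ)} with hAjdef
    -- `Aj` is measurable for the stopped σ-algebra of each truncation of `ρ s`
    have hAjmeas : ∀ k : ℕ, j ≤ k →
        MeasurableSet[stoppedSigma F (trunc (ρ s) k) (trunc_stop hF_mono (hρ_stop s) k)] Aj := by
      intro k hjk
      refine mem_stoppedSigma_iff.mpr fun n => ?_
      have hset : Aj ∩ {ω | trunc (ρ s) k ω ≤ n}
          = A ∩ {ω | ρ s ω ≤ fun l => min j (n l)} := by
        ext ω
        simp only [hAjdef, Set.mem_inter_iff, Set.mem_setOf_eq]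
        constructor
        · rintro ⟨⟨hA1, h2⟩, h3⟩
          have hk2 : ρ s ω ≤ (fun _ => k : Fin d → ℕ) :=
            Pi.le_def.mpr fun l => le_trans (Pi.le_def.mp h2 l) hjk
          rw [trunc_of_le hk2] at h3
          exact ⟨hA1, Pi.le_def.mpr fun l => le_min (Pi.le_def.mp h2 l) (Pi.le_def.mp h3 l)⟩
        · rintro ⟨hA1, h2⟩
          have hj2 : ρ s ω ≤ (fun _ => j : Fin d → ℕ) :=
            Pi.le_def.mpr fun l => le_trans (Pi.le_def.mp h2 l) (min_le_left _ _)
          have hn2 : ρ s ω ≤ n :=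
            Pi.le_def.mpr fun l => le_trans (Pi.le_def.mp h2 l) (min_le_right _ _)
          have hk2 : ρ s ω ≤ (fun _ => k : Fin d → ℕ) :=
            Pi.le_def.mpr fun l => le_trans (Pi.le_def.mp hj2 l) hjk
          refine ⟨⟨hA1, hj2⟩, ?_⟩
          rw [trunc_of_le hk2]
          exact hn2
      rw [hset]
      exact hF_mono (Pi.le_def.mpr fun l => min_le_right _ _) _
        (hA (fun l => min j (n l)))
    -- for `k ≥ j`, the truncated optional sampling identity
    have hconst : ∀ k : ℕ, j ≤ k →
        ∫ ω in Aj, M (trunc (ρ t) k ω) ω ∂P = ∫ ω in Aj, M (ρ s ω) ω ∂P := by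
      intro k hjk
      have h1 : ∫ ω in Aj, M (trunc (ρ s) k ω) ω ∂P
          = ∫ ω in Aj, M (fun _ => k) ω ∂P :=
        setIntegral_stopped_eq hF_le hF_mono hM_int hM_mart
          (trunc_stop hF_mono (hρ_stop s) k) (trunc_le_const k) (hAjmeas k hjk)
      have h2 : ∫ ω in Aj, M (trunc (ρ t) k ω) ω ∂P
          = ∫ ω in Aj, M (fun _ => k) ω ∂P :=
        setIntegral_stopped_eq hF_le hF_mono hM_int hM_mart
          (trunc_stop hF_mono (hρ_stop t) k) (trunc_le_const k)
          (stoppedSigma_mono (fun ω => trunc_le_trunc (hsts ω)) _ _ _ (hAjmeas k hjk))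
      have h3 : ∫ ω in Aj, M (trunc (ρ s) k ω) ω ∂P = ∫ ω in Aj, M (ρ s ω) ω ∂P := by
        refine setIntegral_congr_fun (hAjm j) fun ω hω => ?_
        have hk2 : ρ s ω ≤ (fun _ => k : Fin d → ℕ) :=
          Pi.le_def.mpr fun l => le_trans (Pi.le_def.mp hω.2 l) hjk
        rw [trunc_of_le hk2]
      rw [h2, ← h1, h3]
    -- `k → ∞` limit
    have hlim : Filter.Tendsto (fun k => ∫ ω in Aj, M (trunc (ρ t) k ω) ω ∂P)
        Filter.atTop (nhds (∫ ω in Aj, M (ρ t ω) ω ∂P)) := by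
      have htr_int : ∀ k : ℕ, Integrable (fun ω => M (trunc (ρ t) k ω) ω) P := fun k =>
        integrable_stopped_bdd hF_le hF_mono hM_int (trunc_stop hF_mono (hρ_stop t) k)
          (trunc_le_const k)
      have hbound : ∀ k : ℕ,
          ‖(∫ ω in Aj, M (trunc (ρ t) k ω) ω ∂P) - ∫ ω in Aj, M (ρ t ω) ω ∂P‖
            ≤ ∫ ω, ‖M (trunc (ρ t) k ω) ω - M (ρ t ω) ω‖ ∂P := by
        intro k
        rw [← integral_sub ((htr_int k).integrableOn) ((hkey t).1.integrableOn)]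
        refine (norm_integral_le_integral_norm _).trans ?_
        exact setIntegral_le_integral ((htr_int k).sub (hkey t).1).norm
          (Filter.Eventually.of_forall fun ω => norm_nonneg _)
      have hz : Filter.Tendsto
          (fun k => (∫ ω in Aj, M (trunc (ρ t) k ω) ω ∂P) - ∫ ω in Aj, M (ρ t ω) ω ∂P)
          Filter.atTop (nhds 0) := squeeze_zero_norm hbound (hkey t).2
      have h6 := hz.add (tendsto_const_nhds (x := ∫ ω in Aj, M (ρ t ω) ω ∂P)
        (f := Filter.atTop (α := ℕ)))
      rw [zero_add] at h6
      refine h6.congr fun k => ?_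
      ring
    -- the sequence is eventually constant with value `∫ ω in Aj, M (ρ s ω) ω`
    have hconsttend : Filter.Tendsto (fun k => ∫ ω in Aj, M (trunc (ρ t) k ω) ω ∂P)
        Filter.atTop (nhds (∫ ω in Aj, M (ρ s ω) ω ∂P)) := by
      refine Filter.Tendsto.congr' ?_ tendsto_const_nhds
      filter_upwards [Filter.eventually_ge_atTop j] with k hk
      exact (hconst k hk).symm
    exact tendsto_nhds_unique hconsttend hlim
  -- `j → ∞` limit
  have hUnion : (⋃ j : ℕ, A ∩ {ω' | ρ s ω' ≤ (fun _ => j : Fin d → ℕ)}) = A := by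
    ext ω
    simp only [Set.mem_iUnion, Set.mem_inter_iff, Set.mem_setOf_eq]
    exact ⟨fun ⟨j, hj⟩ => hj.1, fun hω => ⟨mx (ρ s) ω, hω, mx_le_iff.mp le_rfl⟩⟩
  have hmono : Monotone (fun j : ℕ => A ∩ {ω' | ρ s ω' ≤ (fun _ => j : Fin d → ℕ)}) := by
    intro j1 j2 hj
    refine Set.inter_subset_inter subset_rfl fun ω hω => ?_
    exact Pi.le_def.mpr fun l => le_trans (Pi.le_def.mp hω l) hj
  have h1 : Filter.Tendsto
      (fun j : ℕ => ∫ ω in A ∩ {ω' | ρ s ω' ≤ (fun _ => j : Fin d → ℕ)}, M (ρ s ω) ω ∂P)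
      Filter.atTop (nhds (∫ ω in A, M (ρ s ω) ω ∂P)) := by
    have := tendsto_setIntegral_of_monotone hAjm hmono
      (hUnion ▸ ((hkey s).1.integrableOn : IntegrableOn (fun ω => M (ρ s ω) ω) A P))
    rwa [hUnion] at this
  have h2 : Filter.Tendsto
      (fun j : ℕ => ∫ ω in A ∩ {ω' | ρ s ω' ≤ (fun _ => j : Fin d → ℕ)}, M (ρ t ω) ω ∂P)
      Filter.atTop (nhds (∫ ω in A, M (ρ t ω) ω ∂P)) := by
    have := tendsto_setIntegral_of_monotone hAjm hmono
      (hUnion ▸ ((hkey t).1.integrableOn : IntegrableOn (fun ω => M (ρ t ω) ω) A P))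
    rwa [hUnion] at this
  exact tendsto_nhds_unique (h1.congr hAj) h2


end Stmt6
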